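/- Let A be an m×n real matrix with Frobenius norm strictly less than 1, and let x ~ N(0, I_m) and y ~ N(0, I_n) be independent standard Gaussian vectors. Then E[exp(xᵀAy)] ≤ 1/√(1 − ‖A‖_F²). -/

import Mathlib

open MeasureTheory ProbabilityTheory

/-- The standard Gaussian measure `N(0, I_m)` on `Fin m → ℝ`. -/
noncomputable def stdGaussian (m : ℕ) : Measure (Fin m → ℝ) :=
  Measure.pi fun _ => gaussianReal 0 1

/-- The Frobenius norm of a matrix. -/
noncomputable def frobNorm {m n : ℕ} (A : Matrix (Fin m) (Fin n) ℝ) : ℝ :=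
  Real.sqrt (∑ i, ∑ j, (A i j) ^ 2)

open Real ENNReal Matrix Finset

instance stdGaussian_isProb (m : ℕ) : IsProbabilityMeasure (stdGaussian m) := by
  unfold _root_.stdGaussian; infer_instance

section AuxProofs

/-- Tonelli for finite products of measures on ℝ. -/
lemma lintegral_pi_prod : ∀ {n : ℕ} (μ : Fin n → Measure ℝ) [∀ i, SigmaFinite (μ i)]
    (f : Fin n → ℝ → ℝ≥0∞), (∀ i, Measurable (f i)) →
    ∫⁻ x : Fin n → ℝ, ∏ i, f i (x i) ∂Measure.pi μ = ∏ i, ∫⁻ t, f i t ∂μ i := by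
  intro n
  induction n with
  | zero =>
    intro μ _ f hf
    simp [lintegral_const, Measure.pi_univ]
  | succ n ih =>
    intro μ _ f hf
    have h := (measurePreserving_piFinSuccAbove μ 0).symm
    have hmeas : Measurable fun x : Fin (n+1) → ℝ => ∏ i, f i (x i) :=
      Finset.measurable_prod _ fun i _ => (hf i).comp (measurable_pi_apply i)
    rw [← h.lintegral_comp hmeas]
    have key : ∀ p : ℝ × (Fin n → ℝ),
        (∏ i, f i ((MeasurableEquiv.piFinSuccAbove (fun _ => ℝ) 0).symm p i)) =
        f 0 p.1 * ∏ j, f j.succ (p.2 j) := by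
      intro p
      simp_rw [MeasurableEquiv.piFinSuccAbove_symm_apply, Fin.insertNthEquiv,
        Equiv.coe_fn_mk, Fin.insertNth_zero]
      rw [Fin.prod_univ_succ]
      simp
    simp_rw [key]
    rw [lintegral_prod_mul (f := f 0) (g := fun b : Fin n → ℝ => ∏ j, f j.succ (b j))
      ((hf 0).aemeasurable)
      ((Finset.measurable_prod _ fun j _ =>
        (hf j.succ).comp (measurable_pi_apply j)).aemeasurable)]
    have h2 := ih (fun j => μ (Fin.succAbove 0 j)) (fun j => f (Fin.succAbove 0 j))
      (fun j => hf _)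
    simp_rw [Fin.zero_succAbove] at h2 ⊢
    rw [h2, Fin.prod_univ_succ]

lemma gaussianPDFReal_std (t : ℝ) :
    gaussianPDFReal 0 1 t = (Real.sqrt (2 * π))⁻¹ * Real.exp (-(t ^ 2) / 2) := by
  simp [gaussianPDFReal]

lemma lintegral_ofReal_gaussianReal (g : ℝ → ℝ) (hg : Measurable g) (hg0 : ∀ t, 0 ≤ g t)
    (hi : Integrable (fun t => gaussianPDFReal 0 1 t * g t)) :
    ∫⁻ t, ENNReal.ofReal (g t) ∂gaussianReal 0 1
      = ENNReal.ofReal (∫ t, gaussianPDFReal 0 1 t * g t) := by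
  rw [gaussianReal_of_var_ne_zero _ one_ne_zero]
  rw [lintegral_withDensity_eq_lintegral_mul _ (measurable_gaussianPDF _ _) hg.ennreal_ofReal]
  simp_rw [Pi.mul_apply, gaussianPDF, ← ENNReal.ofReal_mul (gaussianPDFReal_nonneg _ _ _)]
  rw [← ofReal_integral_eq_lintegral_ofReal hi
    (Filter.Eventually.of_forall fun t =>
      mul_nonneg (gaussianPDFReal_nonneg _ _ _) (hg0 t))]

lemma lintegral_exp_mul_gaussian (c : ℝ) :
    ∫⁻ t, ENNReal.ofReal (Real.exp (c * t)) ∂gaussianReal 0 1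
      = ENNReal.ofReal (Real.exp (c ^ 2 / 2)) := by
  have h2π : (0:ℝ) < Real.sqrt (2 * π) := by positivity
  have hfun : ∀ t : ℝ, gaussianPDFReal 0 1 t * Real.exp (c * t)
      = (Real.sqrt (2 * π))⁻¹ * Real.exp (c ^ 2 / 2) * Real.exp (-(1/2) * (t - c) ^ 2) := by
    intro t
    rw [gaussianPDFReal_std, mul_assoc, ← Real.exp_add, mul_assoc, ← Real.exp_add,
      show -(t ^ 2) / 2 + c * t = c ^ 2 / 2 + -(1/2) * (t - c) ^ 2 by ring]
  have hint : Integrable fun t => gaussianPDFReal 0 1 t * Real.exp (c * t) := by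
    simp_rw [hfun]
    exact ((integrable_exp_neg_mul_sq (by norm_num : (0:ℝ) < 1/2)).comp_sub_right c).const_mul _
  rw [lintegral_ofReal_gaussianReal _ (by fun_prop) (fun t => Real.exp_nonneg _) hint]
  congr 1
  simp_rw [hfun]
  rw [integral_const_mul,
    integral_sub_right_eq_self (fun t => Real.exp (-(1/2) * t ^ 2)) c,
    integral_gaussian, show π / (1/2) = 2 * π by ring]
  field_simp

lemma lintegral_exp_sq_gaussian {l : ℝ} (h0 : 0 ≤ l) (h1 : l < 1) :
    ∫⁻ t, ENNReal.ofReal (Real.exp (l * t ^ 2 / 2)) ∂gaussianReal 0 1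
      = ENNReal.ofReal (1 / Real.sqrt (1 - l)) := by
  have hb : (0:ℝ) < (1 - l) / 2 := by linarith
  have h2π : (0:ℝ) < Real.sqrt (2 * π) := by positivity
  have hfun : ∀ t : ℝ, gaussianPDFReal 0 1 t * Real.exp (l * t ^ 2 / 2)
      = (Real.sqrt (2 * π))⁻¹ * Real.exp (-((1 - l)/2) * t ^ 2) := by
    intro t
    rw [gaussianPDFReal_std, mul_assoc, ← Real.exp_add,
      show -(t ^ 2) / 2 + l * t ^ 2 / 2 = -((1 - l)/2) * t ^ 2 by ring]
  have hint : Integrable fun t => gaussianPDFReal 0 1 t * Real.exp (l * t ^ 2 / 2) := by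
    simp_rw [hfun]
    exact (integrable_exp_neg_mul_sq hb).const_mul _
  rw [lintegral_ofReal_gaussianReal _ (by fun_prop) (fun t => Real.exp_nonneg _) hint]
  congr 1
  simp_rw [hfun]
  have hl : (0:ℝ) < 1 - l := by linarith
  rw [integral_const_mul, integral_gaussian,
    show π / ((1 - l)/2) = (2 * π) / (1 - l) by field_simp,
    Real.sqrt_div (by positivity) (1 - l)]
  have hsl : Real.sqrt (1 - l) ≠ 0 := by positivity
  field_simp

/-- std Gaussian as density against Lebesgue. -/
lemma stdGaussian_eq (n : ℕ) :
    stdGaussian n = volume.withDensity fun y => ∏ i, gaussianPDF 0 1 (y i) := by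
  unfold _root_.stdGaussian
  refine Measure.pi_eq fun s hs => ?_
  rw [withDensity_apply _ (MeasurableSet.univ_pi hs),
    ← lintegral_indicator (MeasurableSet.univ_pi hs) _]
  have key : ∀ y : Fin n → ℝ,
      (Set.univ.pi s).indicator (fun y => ∏ i, gaussianPDF 0 1 (y i)) y
        = ∏ i, (s i).indicator (gaussianPDF 0 1) (y i) := by
    intro y
    by_cases hy : y ∈ Set.univ.pi s
    · rw [Set.indicator_of_mem hy]
      exact Finset.prod_congr rfl fun i _ =>
        (Set.indicator_of_mem (hy i (Set.mem_univ i)) _).symm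
    · rw [Set.indicator_of_notMem hy]
      rw [Set.mem_univ_pi] at hy
      push_neg at hy
      obtain ⟨i, hi⟩ := hy
      exact (Finset.prod_eq_zero (Finset.mem_univ i)
        (Set.indicator_of_notMem hi _)).symm
  simp_rw [key]
  rw [show (volume : Measure (Fin n → ℝ)) = Measure.pi fun _ => volume from volume_pi,
    lintegral_pi_prod _ _ fun i => (measurable_gaussianPDF 0 1).indicator (hs i)]
  exact Finset.prod_congr rfl fun i _ => by
    rw [lintegral_indicator (hs i) _, gaussianReal_apply 0 one_ne_zero]

/-- Lebesgue measure on `Fin n → ℝ` is invariant under an orthogonal matrix. -/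
lemma lintegral_volume_comp_mulVec {n : ℕ} (U : Matrix (Fin n) (Fin n) ℝ)
    (hU : Uᵀ * U = 1) {g : (Fin n → ℝ) → ℝ≥0∞} (hg : Measurable g) :
    ∫⁻ y, g y ∂(volume : Measure (Fin n → ℝ)) = ∫⁻ z, g (U *ᵥ z) ∂volume := by
  have hdet2 : U.det * U.det = 1 := by
    have := congrArg Matrix.det hU
    rwa [Matrix.det_mul, Matrix.det_transpose, Matrix.det_one] at this
  have hdet : U.det ≠ 0 := by
    intro h; rw [h, mul_zero] at hdet2; exact zero_ne_one hdet2
  have habs : |U.det| = 1 := by nlinarith [abs_nonneg U.det, sq_abs U.det, abs_nonneg U.det]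
  have hmap := Real.map_matrix_volume_pi_eq_smul_volume_pi hdet
  rw [abs_inv, habs, inv_one, ENNReal.ofReal_one, one_smul] at hmap
  have hTm : Measurable (Matrix.toLin' U) := by
    have : Measurable fun z : Fin n → ℝ => U *ᵥ z :=
      (continuous_const.matrix_mulVec continuous_id).measurable
    exact this
  calc ∫⁻ y, g y ∂(volume : Measure (Fin n → ℝ))
      = ∫⁻ y, g y ∂(Measure.map (Matrix.toLin' U) volume) := by rw [hmap]
    _ = ∫⁻ z, g (Matrix.toLin' U z) ∂volume := lintegral_map hg hTm
    _ = ∫⁻ z, g (U *ᵥ z) ∂volume := by simp_rw [Matrix.toLin'_apply]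

lemma sum_sq_mulVec {m n : ℕ} (A : Matrix (Fin m) (Fin n) ℝ) (w : Fin n → ℝ) :
    ∑ i, (∑ j, A i j * w j) ^ 2 = w ⬝ᵥ ((Aᵀ * A) *ᵥ w) := by
  have hL : ∑ i, (∑ j, A i j * w j) ^ 2
      = ∑ i, ∑ j, ∑ k, (A i j * w j) * (A i k * w k) := by
    refine Finset.sum_congr rfl fun i _ => ?_
    rw [sq, Finset.sum_mul_sum]
  rw [hL, Finset.sum_comm]
  simp only [dotProduct, Matrix.mulVec, Matrix.mul_apply, Matrix.transpose_apply,
    Finset.sum_mul, Finset.mul_sum]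
  refine Finset.sum_congr rfl fun j _ => ?_
  rw [Finset.sum_comm]
  exact Finset.sum_congr rfl fun i _ => Finset.sum_congr rfl fun k _ => by ring

lemma quad_rot {n : ℕ} (U M : Matrix (Fin n) (Fin n) ℝ) (z : Fin n → ℝ) :
    (U *ᵥ z) ⬝ᵥ (M *ᵥ (U *ᵥ z)) = z ⬝ᵥ ((Uᵀ * M * U) *ᵥ z) := by
  rw [mulVec_mulVec, dotProduct_mulVec, ← vecMul_transpose, vecMul_vecMul,
    ← dotProduct_mulVec, ← mul_assoc]

lemma prod_gaussianPDF_eq {n : ℕ} (y : Fin n → ℝ) :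
    ∏ i, gaussianPDF 0 1 (y i)
      = ENNReal.ofReal ((Real.sqrt (2 * π))⁻¹ ^ n * Real.exp (-(∑ i, (y i) ^ 2) / 2)) := by
  simp_rw [gaussianPDF]
  rw [← ENNReal.ofReal_prod_of_nonneg fun i _ => gaussianPDFReal_nonneg _ _ _]
  congr 1
  simp_rw [gaussianPDFReal_std]
  rw [Finset.prod_mul_distrib, Finset.prod_const, Finset.card_univ, Fintype.card_fin,
    ← Real.exp_sum]
  congr 1
  rw [← Finset.sum_div, ← Finset.sum_neg_distrib]

lemma one_sub_sum_le_prod_one_sub {ι : Type*} (s : Finset ι) (f : ι → ℝ)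
    (h0 : ∀ i ∈ s, 0 ≤ f i) (h1 : ∀ i ∈ s, f i ≤ 1) :
    1 - ∑ i ∈ s, f i ≤ ∏ i ∈ s, (1 - f i) := by
  classical
  induction s using Finset.cons_induction with
  | empty => simp
  | cons a s ha ih =>
    rw [Finset.prod_cons, Finset.sum_cons]
    have hs0 : 0 ≤ ∑ i ∈ s, f i :=
      Finset.sum_nonneg fun i hi => h0 i (Finset.mem_cons_of_mem hi)
    have hIH := ih (fun i hi => h0 i (Finset.mem_cons_of_mem hi))
      (fun i hi => h1 i (Finset.mem_cons_of_mem hi))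
    have hfa0 := h0 a (Finset.mem_cons_self a s)
    have hfa1 := h1 a (Finset.mem_cons_self a s)
    nlinarith [mul_le_mul_of_nonneg_left hIH (by linarith : (0:ℝ) ≤ 1 - f a)]

lemma sqrt_prod' {ι : Type*} (s : Finset ι) (f : ι → ℝ) (h : ∀ i ∈ s, 0 ≤ f i) :
    Real.sqrt (∏ i ∈ s, f i) = ∏ i ∈ s, Real.sqrt (f i) := by
  classical
  induction s using Finset.cons_induction with
  | empty => simp
  | cons a s ha ih =>
    rw [Finset.prod_cons, Finset.prod_cons,
      Real.sqrt_mul (h a (Finset.mem_cons_self a s)),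
      ih fun i hi => h i (Finset.mem_cons_of_mem hi)]

lemma exists_rotation {m n : ℕ} (A : Matrix (Fin m) (Fin n) ℝ) :
    ∃ lam : Fin n → ℝ, (∀ k, 0 ≤ lam k) ∧ (∑ k, lam k = ∑ i, ∑ j, (A i j) ^ 2) ∧
      ∫⁻ y, ENNReal.ofReal (Real.exp ((∑ i, (∑ j, A i j * y j) ^ 2) / 2)) ∂stdGaussian n
        = ∫⁻ z, ENNReal.ofReal (Real.exp (∑ k, lam k * (z k) ^ 2 / 2)) ∂stdGaussian n := by
  classical
  have hBps : (Aᵀ * A).PosSemidef := Matrix.posSemidef_conjTranspose_mul_self A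
  have hH : (Aᵀ * A).IsHermitian := hBps.isHermitian
  set lam := hH.eigenvalues with hlamdef
  set U : Matrix (Fin n) (Fin n) ℝ := (hH.eigenvectorUnitary : Matrix (Fin n) (Fin n) ℝ)
    with hUdef
  have hUnit : star U * U = 1 := hH.eigenvectorUnitary.2.1
  have hU : Uᵀ * U = 1 := hUnit
  have hdiag : Uᵀ * (Aᵀ * A) * U = Matrix.diagonal lam := by
    have := hH.conjStarAlgAut_star_eigenvectorUnitary
    simpa [hUdef, hlamdef, Matrix.star_eq_conjTranspose] using this
  refine ⟨lam, fun k => hBps.eigenvalues_nonneg k, ?_, ?_⟩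
  · have htr : (Aᵀ * A).trace = ∑ k, lam k := by
      conv_lhs => rw [hH.spectral_theorem]
      rw [Unitary.conjStarAlgAut_apply, Matrix.trace_mul_cycle, ← hUdef, hUnit, one_mul, Matrix.trace_diagonal]
      simp [hlamdef]
    rw [← htr]
    simp only [Matrix.trace, Matrix.diag, Matrix.mul_apply, Matrix.transpose_apply]
    rw [Finset.sum_comm]
    exact Finset.sum_congr rfl fun i _ => Finset.sum_congr rfl fun j _ => by rw [sq]
  · have hDmeas : Measurable fun y : Fin n → ℝ => ∏ i, gaussianPDF 0 1 (y i) :=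
      Finset.measurable_prod _ fun i _ =>
        (measurable_gaussianPDF 0 1).comp (measurable_pi_apply i)
    have hg1 : Measurable fun y : Fin n → ℝ =>
        ENNReal.ofReal (Real.exp ((∑ i, (∑ j, A i j * y j) ^ 2) / 2)) := by
      have : Measurable fun y : Fin n → ℝ => (∑ i, (∑ j, A i j * y j) ^ 2) / 2 :=
        (Finset.measurable_sum _ fun i _ =>
          (Finset.measurable_sum _ fun j _ =>
            (by fun_prop : Measurable fun y : Fin n → ℝ => A i j * y j)).pow_const 2).div_const 2
      exact (Real.measurable_exp.comp this).ennreal_ofReal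
    have hg2 : Measurable fun z : Fin n → ℝ =>
        ENNReal.ofReal (Real.exp (∑ k, lam k * (z k) ^ 2 / 2)) := by
      have : Measurable fun z : Fin n → ℝ => ∑ k, lam k * (z k) ^ 2 / 2 :=
        Finset.measurable_sum _ fun k _ =>
          (by fun_prop : Measurable fun z : Fin n → ℝ => lam k * (z k) ^ 2 / 2)
      exact (Real.measurable_exp.comp this).ennreal_ofReal
    rw [stdGaussian_eq n,
      lintegral_withDensity_eq_lintegral_mul _ hDmeas hg1,
      lintegral_withDensity_eq_lintegral_mul _ hDmeas hg2]
    simp only [Pi.mul_apply]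
    rw [lintegral_volume_comp_mulVec U hU (g := fun y => (∏ i, gaussianPDF 0 1 (y i)) *
      ENNReal.ofReal (Real.exp ((∑ i, (∑ j, A i j * y j) ^ 2) / 2))) (hDmeas.mul hg1)]
    refine lintegral_congr fun z => ?_
    have hnorm : ∑ i, ((U *ᵥ z) i) ^ 2 = ∑ i, (z i) ^ 2 := by
      have hv : ∀ v : Fin n → ℝ, ∑ i, (v i) ^ 2 = v ⬝ᵥ v := fun v => by
        simp [dotProduct, sq]
      rw [hv, hv]
      have h := quad_rot U 1 z
      rw [one_mulVec] at h
      rw [h, mul_one, hU, one_mulVec]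
    have hq : ∑ i, (∑ j, A i j * (U *ᵥ z) j) ^ 2 = ∑ k, lam k * (z k) ^ 2 := by
      rw [sum_sq_mulVec, quad_rot, hdiag]
      simp only [dotProduct, Matrix.mulVec_diagonal]
      exact Finset.sum_congr rfl fun k _ => by ring
    rw [prod_gaussianPDF_eq, prod_gaussianPDF_eq, hnorm, hq, Finset.sum_div]

end AuxProofs

/-- If `‖A‖_F < 1` and `x ~ N(0,I_m)`, `y ~ N(0,I_n)` are independent, then
`E[exp (xᵀ A y)] ≤ 1 / √(1 - ‖A‖_F²)`. -/
theorem expectation_exp_bilinear_gaussian_le {m n : ℕ} (A : Matrix (Fin m) (Fin n) ℝ)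
    (hA : frobNorm A < 1) :
    ∫ p : (Fin m → ℝ) × (Fin n → ℝ), Real.exp (∑ i, ∑ j, p.1 i * A i j * p.2 j)
        ∂((stdGaussian m).prod (stdGaussian n))
      ≤ 1 / Real.sqrt (1 - frobNorm A ^ 2) := by
  classical
  have hS0 : 0 ≤ ∑ i, ∑ j, (A i j) ^ 2 :=
    Finset.sum_nonneg fun i _ => Finset.sum_nonneg fun j _ => sq_nonneg _
  have hfrob : frobNorm A ^ 2 = ∑ i, ∑ j, (A i j) ^ 2 := Real.sq_sqrt hS0
  have hS1 : (∑ i, ∑ j, (A i j) ^ 2) < 1 := by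
    rw [← hfrob]
    have h0 : 0 ≤ frobNorm A := Real.sqrt_nonneg _
    nlinarith
  have hmeas : Measurable fun p : (Fin m → ℝ) × (Fin n → ℝ) =>
      ∑ i, ∑ j, p.1 i * A i j * p.2 j :=
    Finset.measurable_sum _ fun i _ => Finset.measurable_sum _ fun j _ =>
      (by fun_prop : Measurable fun p : (Fin m → ℝ) × (Fin n → ℝ) => p.1 i * A i j * p.2 j)
  have hexp : Measurable fun p : (Fin m → ℝ) × (Fin n → ℝ) =>
      Real.exp (∑ i, ∑ j, p.1 i * A i j * p.2 j) := Real.measurable_exp.comp hmeas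
  rw [integral_eq_lintegral_of_nonneg_ae
    (Filter.Eventually.of_forall fun p => Real.exp_nonneg _) hexp.aestronglyMeasurable]
  have hRHS0 : 0 ≤ 1 / Real.sqrt (1 - frobNorm A ^ 2) := by positivity
  refine ENNReal.toReal_le_of_le_ofReal hRHS0 ?_
  rw [lintegral_prod_symm _ hexp.ennreal_ofReal.aemeasurable]
  have hinner : ∀ y : Fin n → ℝ,
      ∫⁻ x, ENNReal.ofReal (Real.exp (∑ i, ∑ j, x i * A i j * y j)) ∂stdGaussian m
        = ENNReal.ofReal (Real.exp ((∑ i, (∑ j, A i j * y j) ^ 2) / 2)) := by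
    intro y
    have hpt : ∀ x : Fin m → ℝ,
        ENNReal.ofReal (Real.exp (∑ i, ∑ j, x i * A i j * y j))
          = ∏ i, ENNReal.ofReal (Real.exp ((∑ j, A i j * y j) * x i)) := by
      intro x
      rw [← ENNReal.ofReal_prod_of_nonneg fun i _ => Real.exp_nonneg _, ← Real.exp_sum]
      congr 2
      refine Finset.sum_congr rfl fun i _ => ?_
      rw [Finset.sum_mul]
      exact Finset.sum_congr rfl fun j _ => by ring
    simp_rw [hpt]
    rw [show stdGaussian m = Measure.pi fun _ => gaussianReal 0 1 from rfl,
      lintegral_pi_prod _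
        (fun i => fun t : ℝ => ENNReal.ofReal (Real.exp ((∑ j, A i j * y j) * t)))
        (fun i => by fun_prop)]
    simp_rw [lintegral_exp_mul_gaussian]
    rw [← ENNReal.ofReal_prod_of_nonneg fun i _ => Real.exp_nonneg _, ← Real.exp_sum,
      ← Finset.sum_div]
  simp_rw [hinner]
  obtain ⟨lam, hlam0, hlamsum, hrot⟩ := exists_rotation A
  rw [hrot]
  have hlam1 : ∀ k, lam k < 1 := by
    intro k
    have hle : lam k ≤ ∑ i, lam i :=
      Finset.single_le_sum (fun i _ => hlam0 i) (Finset.mem_univ k)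
    rw [hlamsum] at hle
    linarith
  have hpt2 : ∀ z : Fin n → ℝ,
      ENNReal.ofReal (Real.exp (∑ k, lam k * (z k) ^ 2 / 2))
        = ∏ k, ENNReal.ofReal (Real.exp (lam k * (z k) ^ 2 / 2)) := by
    intro z
    rw [← ENNReal.ofReal_prod_of_nonneg fun i _ => Real.exp_nonneg _, ← Real.exp_sum]
  simp_rw [hpt2]
  rw [show stdGaussian n = Measure.pi fun _ => gaussianReal 0 1 from rfl,
    lintegral_pi_prod _
      (fun k => fun t : ℝ => ENNReal.ofReal (Real.exp (lam k * t ^ 2 / 2)))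
      (fun k => by fun_prop)]
  simp_rw [fun k => lintegral_exp_sq_gaussian (hlam0 k) (hlam1 k)]
  rw [← ENNReal.ofReal_prod_of_nonneg fun k _ => by positivity]
  apply ENNReal.ofReal_le_ofReal
  have h1l : ∀ k, (0:ℝ) < 1 - lam k := fun k => by have := hlam1 k; linarith
  have hprod_pos : (0:ℝ) < ∏ k, Real.sqrt (1 - lam k) :=
    Finset.prod_pos fun k _ => Real.sqrt_pos.mpr (h1l k)
  have hw : 1 - (∑ i, ∑ j, (A i j) ^ 2) ≤ ∏ k, (1 - lam k) := by
    have h := one_sub_sum_le_prod_one_sub Finset.univ lam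
      (fun k _ => hlam0 k) (fun k _ => (hlam1 k).le)
    rwa [hlamsum] at h
  have hsq : Real.sqrt (1 - frobNorm A ^ 2) ≤ ∏ k, Real.sqrt (1 - lam k) := by
    rw [hfrob, ← sqrt_prod' _ _ fun k _ => (h1l k).le]
    exact Real.sqrt_le_sqrt hw
  calc ∏ k, 1 / Real.sqrt (1 - lam k)
      = 1 / ∏ k, Real.sqrt (1 - lam k) := by
        simp only [one_div]
        exact Finset.prod_inv_distrib _
    _ ≤ 1 / Real.sqrt (1 - frobNorm A ^ 2) := by
        apply one_div_le_one_div_of_le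
        · rw [hfrob]; exact Real.sqrt_pos.mpr (by linarith)
        · exact hsq
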